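/- Let D be a finite dataset with pairwise distinct first-period choices. Then D is naively rationalizable if and only if it satisfies Condition 1, since N-SARP is vacuously satisfied when all x₁^k are distinct. -/

import Mathlib

def maxSet {X : Type} (S : Set X) (pref : X → X → Prop) : Set X :=
  {x | x ∈ S ∧ ∀ y ∈ S, pref x y}

def WeakOrder {X : Type} (pref : X → X → Prop) : Prop :=
  (∀ a b, pref a b ∨ pref b a) ∧ Transitive pref

def sec1 {X₁ X₂ : Type} (B : Set (X₁ × X₂)) (a : X₁) : Set (X₁ × X₂) :=
  {y ∈ B | y.1 = a}

def sec2 {X₁ X₂ : Type} (B : Set (X₁ × X₂)) (b : X₂) : Set (X₁ × X₂) :=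
  {y ∈ B | y.2 = b}

def NSARP {K X₁ X₂ : Type} (x : K → X₁ × X₂) (B : K → Set (X₁ × X₂)) : Prop :=
  ¬ ∃ (L : ℕ) (k : Fin (L + 1) → K), ∀ l : Fin (L + 1),
      x (k l) ≠ x (k (l + 1)) ∧ x (k l) ∈ sec1 (B (k (l + 1))) (x (k (l + 1))).1

def NNSARP {K X₁ X₂ : Type} (x : K → X₁ × X₂) (B : K → Set (X₁ × X₂)) : Prop :=
  ¬ ∃ (L : ℕ) (k : Fin (L + 1) → K), ∀ l : Fin (L + 1),
      x (k l) ≠ x (k (l + 1)) ∧ x (k l) ∈ sec2 (B (k (l + 1))) (x (k (l + 1))).2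

def Cond1 {K X₁ X₂ : Type} (x : K → X₁ × X₂) (B : K → Set (X₁ × X₂)) : Prop :=
  ∀ S : Set K, S.Nonempty →
    ¬ (⋃ k ∈ S, sec1 (B k) (x k).1) ⊆ ⋃ k ∈ S, (B k \ sec1 (B k) (x k).1)

def Cond2 {K X₁ X₂ : Type} (x : K → X₁ × X₂) (B : K → Set (X₁ × X₂)) : Prop :=
  ¬ ∃ (L : ℕ) (k : Fin (L + 1) → K), ∀ l : Fin (L + 1),
      x (k l) ≠ x (k (l + 1)) ∧ x (k l) ∈ sec1 (B (k (l + 1))) (x (k l)).1 ∧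
      sec1 (B (k (l + 1))) (x (k l)).1 ⊆ sec1 (B (k l)) (x (k l)).1

def NaiveRat {K X₁ X₂ : Type} (x : K → X₁ × X₂) (B : K → Set (X₁ × X₂)) : Prop :=
  ∃ p1 p2 : X₁ × X₂ → X₁ × X₂ → Prop, WeakOrder p1 ∧ WeakOrder p2 ∧
    ∀ k, (∃ z, maxSet (B k) p1 = {z} ∧ z ∈ sec1 (B k) (x k).1) ∧
      maxSet (sec1 (B k) (x k).1) p2 = {x k}

def NaiveNashRat {K X₁ X₂ : Type} (x : K → X₁ × X₂) (B : K → Set (X₁ × X₂)) : Prop :=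
  ∃ p1 p2 : X₁ × X₂ → X₁ × X₂ → Prop, WeakOrder p1 ∧ WeakOrder p2 ∧
    ∀ k, x k ∈ maxSet (sec2 (B k) (x k).2) p1 ∧
      maxSet (sec1 (B k) (x k).1) p2 = {x k}

def StrictNaiveNashRat {K X₁ X₂ : Type} (x : K → X₁ × X₂) (B : K → Set (X₁ × X₂)) : Prop :=
  ∃ p1 p2 : X₁ × X₂ → X₁ × X₂ → Prop, WeakOrder p1 ∧ WeakOrder p2 ∧
    ∀ k, maxSet (sec2 (B k) (x k).2) p1 = {x k} ∧
      maxSet (sec1 (B k) (x k).1) p2 = {x k}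

def SophRat {K X₁ X₂ : Type} (x : K → X₁ × X₂) (B : K → Set (X₁ × X₂)) : Prop :=
  ∃ p1 p2 : X₁ × X₂ → X₁ × X₂ → Prop, WeakOrder p1 ∧ WeakOrder p2 ∧
    ∀ k, maxSet (⋃ a ∈ Prod.fst '' B k, maxSet (sec1 (B k) a) p2) p1 = {x k}

open Classical in
lemma aux_chain' {K X₁ X₂ : Type} (x : K → X₁ × X₂) (B : K → Set (X₁ × X₂))
    (hc : Cond1 x B) :
    ∀ (n : ℕ) (S : Finset K), S.card ≤ n → ∃ (z : K → X₁ × X₂) (r : K → ℕ),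
      ∀ j ∈ S, z j ∈ sec1 (B j) (x j).1 ∧
        ∀ j' ∈ S, z j' ∈ B j → r j ≤ r j' ∧ (z j' ≠ z j → r j < r j') := by
  intro n
  induction n with
  | zero =>
    intro S hS
    refine ⟨x, fun _ => 0, ?_⟩
    intro j hj
    rw [Finset.card_eq_zero.mp (Nat.le_zero.mp hS)] at hj
    exact absurd hj (Finset.notMem_empty j)
  | succ n ih =>
    intro S hS
    rcases S.eq_empty_or_nonempty with rfl | hne
    · exact ⟨x, fun _ => 0, by simp⟩
    have hSne : (↑S : Set K).Nonempty := by
      obtain ⟨k, hk⟩ := hne; exact ⟨k, by simpa using hk⟩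
    obtain ⟨y, hyU, hyD⟩ := Set.not_subset.mp (hc ↑S hSne)
    obtain ⟨k, hkS, hk⟩ := Set.mem_iUnion₂.mp hyU
    have hkS' : k ∈ S := by simpa using hkS
    have hprop : ∀ j ∈ S, y ∈ B j → y ∈ sec1 (B j) (x j).1 := by
      intro j hj hyB
      by_contra h
      exact hyD (Set.mem_iUnion₂.mpr ⟨j, by simpa using hj, hyB, h⟩)
    have hkB : y ∈ B k := hk.1
    set S' := S.filter (fun j => y ∉ B j) with hS'
    have hsub : S' ⊆ S := Finset.filter_subset _ _
    have hknot : k ∉ S' := by simp [hS', hkB, hkS']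
    have hlt : S'.card < S.card :=
      Finset.card_lt_card (Finset.ssubset_iff_of_subset hsub |>.mpr ⟨k, hkS', hknot⟩)
    obtain ⟨z', r', hz'⟩ := ih S' (by omega)
    refine ⟨fun j => if y ∈ B j then y else z' j,
            fun j => if y ∈ B j then 0 else r' j + 1, ?_⟩
    intro j hj
    by_cases hjB : y ∈ B j
    · refine ⟨by simpa [hjB] using hprop j hj hjB, ?_⟩
      intro j' hj' hmem
      by_cases hj'B : y ∈ B j'
      · simp [hjB, hj'B]
      · simp only [hjB, hj'B, if_true, if_false]
        exact ⟨Nat.zero_le _, fun _ => Nat.succ_pos _⟩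
    · have hjS' : j ∈ S' := by simp [hS', hj, hjB]
      refine ⟨by simpa [hjB] using (hz' j hjS').1, ?_⟩
      intro j' hj' hmem
      by_cases hj'B : y ∈ B j'
      · simp only [hj'B, if_true] at hmem
        exact absurd hmem hjB
      · have hj'S' : j' ∈ S' := by simp [hS', hj', hj'B]
        simp only [hjB, hj'B, if_false] at hmem ⊢
        have := (hz' j hjS').2 j' hj'S' hmem
        exact ⟨by omega, fun hne => by have := this.2 hne; omega⟩

theorem naive_rationalizable_iff_Cond1_of_distinct
    {K X₁ X₂ : Type} [Fintype K]
    (x : K → X₁ × X₂) (B : K → Set (X₁ × X₂)) (hmem : ∀ k, x k ∈ B k)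
    (hdist : ∀ k s : K, k ≠ s → (x k).1 ≠ (x s).1) :
    NaiveRat x B ↔ Cond1 x B := by
  classical
  constructor
  · rintro ⟨p1, p2, ⟨h1tot, h1tr⟩, _, hk⟩ S hS hsub
    choose z hz1 hz2 using fun k => (hk k).1
    have hzmax : ∀ k, z k ∈ maxSet (B k) p1 := by
      intro k
      have : z k ∈ ({z k} : Set (X₁ × X₂)) := rfl
      rwa [← hz1 k] at this
    -- step function on S
    have step : ∀ k : {k // k ∈ S}, ∃ j : {j // j ∈ S},
        p1 (z j.1) (z k.1) ∧ ¬ p1 (z k.1) (z j.1) := by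
      rintro ⟨k, hkS⟩
      have hmem1 : z k ∈ ⋃ j ∈ S, sec1 (B j) (x j).1 :=
        Set.mem_biUnion hkS (hz2 k)
      obtain ⟨j, hjS, hjmem⟩ := Set.mem_iUnion₂.mp (hsub hmem1)
      refine ⟨⟨j, hjS⟩, (hzmax j).2 (z k) hjmem.1, ?_⟩
      intro hp
      have : z k ∈ maxSet (B j) p1 :=
        ⟨hjmem.1, fun y hy => h1tr hp ((hzmax j).2 y hy)⟩
      rw [hz1 j] at this
      exact hjmem.2 (this ▸ hz2 j)
    choose f hf using step
    obtain ⟨k₀, hk₀⟩ := hS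
    set g : ℕ → {k // k ∈ S} := fun n => f^[n] ⟨k₀, hk₀⟩ with hg
    have hgsucc : ∀ n, g (n + 1) = f (g n) := fun n =>
      Function.iterate_succ_apply' f n _
    have chain : ∀ a b, a < b →
        p1 (z (g b).1) (z (g a).1) ∧ ¬ p1 (z (g a).1) (z (g b).1) := by
      intro a b hab
      induction b with
      | zero => omega
      | succ b ihb =>
        rcases Nat.lt_succ_iff_lt_or_eq.mp hab with h | rfl
        · have h1 := ihb h
          have h2 := hf (g b)
          rw [← hgsucc b] at h2
          refine ⟨h1tr h2.1 h1.1, fun hp => h1.2 (h1tr hp h2.1)⟩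
        · have h2 := hf (g a)
          rw [← hgsucc a] at h2
          exact h2
    have : Finite {k // k ∈ S} := Subtype.finite
    obtain ⟨m, n, hmn, heq⟩ := Finite.exists_ne_map_eq_of_infinite g
    rcases hmn.lt_or_gt with h | h
    · have := chain m n h
      rw [heq] at this
      exact this.2 this.1
    · have := chain n m h
      rw [heq] at this
      exact this.2 this.1
  · intro hc
    obtain ⟨z, r, hz⟩ :=
      aux_chain' x B hc (Finset.univ.card) Finset.univ le_rfl
    have hz' := fun j => hz j (Finset.mem_univ j)
    set rank : X₁ × X₂ → ℕ∞ :=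
      fun w => ⨅ j : {j : K // z j = w}, (r j.1 : ℕ∞) with hrank
    refine ⟨fun a b => rank a ≤ rank b,
            fun a b => (∃ j, x j = a) ∨ ¬ (∃ j, x j = b),
            ⟨fun a b => le_total _ _, fun a b c => le_trans⟩,
            ⟨fun a b => by tauto, fun a b c => by tauto⟩, ?_⟩
    intro k
    have hzBk : z k ∈ B k := (hz' k).1.1
    have hA : rank (z k) ≤ (r k : ℕ∞) := iInf_le (fun j : {j : K // z j = z k} => (r j.1 : ℕ∞)) ⟨k, rfl⟩
    have hB : ∀ w ∈ B k, (r k : ℕ∞) ≤ rank w := by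
      intro w hw
      refine le_iInf fun j => Nat.cast_le.mpr ?_
      exact ((hz' k).2 j.1 (Finset.mem_univ _) (by rw [j.2]; exact hw)).1
    have hC : ∀ w ∈ B k, w ≠ z k → ((r k : ℕ∞) + 1) ≤ rank w := by
      intro w hw hne
      refine le_iInf fun j => ?_
      have : r k < r j.1 :=
        ((hz' k).2 j.1 (Finset.mem_univ _) (by rw [j.2]; exact hw)).2 (by rw [j.2]; exact hne)
      exact_mod_cast Nat.succ_le_of_lt this
    constructor
    · refine ⟨z k, ?_, (hz' k).1⟩
      ext w
      simp only [maxSet, Set.mem_setOf_eq, Set.mem_singleton_iff]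
      constructor
      · rintro ⟨hwB, hwmax⟩
        by_contra hne
        have h1 : rank w ≤ (r k : ℕ∞) := le_trans (hwmax (z k) hzBk) hA
        have h2 := hC w hwB hne
        have h3 : ((r k + 1 : ℕ) : ℕ∞) ≤ ((r k : ℕ) : ℕ∞) := by
          push_cast; exact le_trans h2 h1
        have h4 := Nat.cast_le.mp h3
        omega
      · rintro rfl
        exact ⟨hzBk, fun y hy => le_trans hA (hB y hy)⟩
    · ext w
      simp only [maxSet, Set.mem_setOf_eq, Set.mem_singleton_iff]
      constructor
      · rintro ⟨hwsec, hwmax⟩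
        have := hwmax (x k) ⟨hmem k, rfl⟩
        rcases this with ⟨s, rfl⟩ | h
        · by_cases hsk : s = k
          · rw [hsk]
          · exact absurd hwsec.2 (hdist s k hsk)
        · exact absurd ⟨k, rfl⟩ h
      · rintro rfl
        exact ⟨⟨hmem k, rfl⟩, fun y hy => Or.inl ⟨k, rfl⟩⟩
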